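/- Let T be a unitary operator on a Hilbert space H satisfying: for some sequence k_i → ∞ and a ∈ (0,1), T^{k_i} → aI + (1−a)T in the weak operator topology. Suppose T has a cyclic vector f in H (so T has simple spectrum on H). Define R on H ⊗ H by R(u ⊗ v) = v ⊗ Tu (extended linearly and continuously). Then f ⊗ f is a cyclic vector for R on H ⊗ H; in particular R has simple spectrum on H ⊗ H, and consequently T ⊗ T has spectrum of uniform multiplicity 2 on H ⊗ H. -/

import Mathlib

open Filter

set_option maxHeartbeats 1000000 in
theorem stmt11 {H K : Type*}
    [NormedAddCommGroup H] [InnerProductSpace ℂ H] [CompleteSpace H]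
    [NormedAddCommGroup K] [InnerProductSpace ℂ K] [CompleteSpace K]
    (tp : H →ₗ[ℂ] H →ₗ[ℂ] K)
    (htp_inner : ∀ u v u' v' : H,
      (inner ℂ (tp u v) (tp u' v') : ℂ) = (inner ℂ u u' : ℂ) * (inner ℂ v v' : ℂ))
    (htp_dense : Dense
      ((Submodule.span ℂ (Set.range fun p : H × H => tp p.1 p.2) : Submodule ℂ K) : Set K))
    (T : H ≃ₗᵢ[ℂ] H)
    (k : ℕ → ℕ) (hk : Tendsto k atTop atTop)
    (a : ℝ) (ha0 : 0 < a) (ha1 : a < 1)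
    (hweak : ∀ f g : H,
      Tendsto (fun i => (inner ℂ ((T ^ k i) f) g : ℂ)) atTop
        (nhds (inner ℂ ((a : ℂ) • f + ((1 - a : ℝ) : ℂ) • T f) g)))
    (f : H)
    (hcyc : Dense ((Submodule.span ℂ (Set.range fun n : ℤ => (T ^ n) f) : Submodule ℂ H) : Set H))
    (R : K ≃ₗᵢ[ℂ] K) (hR : ∀ u v : H, R (tp u v) = tp v (T u)) :
    Dense ((Submodule.span ℂ
      (Set.range fun n : ℤ => (R ^ n) (tp f f)) : Submodule ℂ K) : Set K) := by
  classical
  set c : ℂ := ((1 - a : ℝ) : ℂ) with hc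
  set S : Submodule ℂ K := Submodule.span ℂ (Set.range fun n : ℤ => (R ^ n) (tp f f)) with hS
  set M : Submodule ℂ K := S.topologicalClosure with hM
  -- norm of elementary tensors
  have htp_norm : ∀ u v : H, ‖tp u v‖ = ‖u‖ * ‖v‖ := by
    intro u v
    have h1 := htp_inner u v u v
    rw [inner_self_eq_norm_sq_to_K (𝕜 := ℂ), inner_self_eq_norm_sq_to_K (𝕜 := ℂ),
      inner_self_eq_norm_sq_to_K (𝕜 := ℂ)] at h1
    exact (sq_eq_sq₀ (norm_nonneg _) (by positivity)).mp (by rw [mul_pow]; exact_mod_cast h1)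
  -- M is invariant under all integer powers of R
  have hMR : ∀ (m : ℤ) (x : K), x ∈ M → (R ^ m) x ∈ M := by
    intro m x hx
    have hspan : ∀ y ∈ S, (R ^ m) y ∈ (S : Set K) := by
      intro y hy
      induction hy using Submodule.span_induction with
      | mem y hy =>
          obtain ⟨n, rfl⟩ := hy
          have : (R ^ m) ((R ^ n) (tp f f)) = (R ^ (m + n)) (tp f f) := by
            rw [zpow_add, LinearIsometryEquiv.coe_mul, Function.comp_apply]
          rw [this]
          exact Submodule.subset_span ⟨m + n, rfl⟩
      | zero => simpa using Submodule.zero_mem S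
      | add y z _ _ hy hz => rw [map_add]; exact Submodule.add_mem S hy hz
      | smul r y _ hy => rw [map_smul]; exact Submodule.smul_mem S r hy
    have hx' : x ∈ closure (S : Set K) := hx
    have := map_mem_closure (R ^ m).continuous hx' hspan
    exact this
  -- R squared formula
  have hR2 : ∀ u v : H, R (R (tp u v)) = tp (T u) (T v) := by
    intro u v; rw [hR, hR]
  -- even integer powers of R
  have cancel : ∀ y : K, (R ^ (-2 : ℤ)) ((R ^ (2 : ℤ)) y) = y := by
    intro y
    conv_lhs => rw [← Function.comp_apply (f := ⇑(R ^ (-2 : ℤ))) (g := ⇑(R ^ (2 : ℤ))),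
      ← LinearIsometryEquiv.coe_mul, ← zpow_add]
    norm_num
  have hR2' : ∀ u v : H, (R ^ (2 : ℤ)) (tp u v) = tp (T u) (T v) := by
    intro u v
    have : (R ^ (2 : ℤ)) = R * R := by rw [zpow_two]
    rw [this, LinearIsometryEquiv.coe_mul, Function.comp_apply, hR2]
  have hR2neg : ∀ u v : H, (R ^ (-2 : ℤ)) (tp u v) = tp ((T ^ (-1 : ℤ)) u) ((T ^ (-1 : ℤ)) v) := by
    intro u v
    have h1 : (R ^ (2 : ℤ)) (tp ((T ^ (-1 : ℤ)) u) ((T ^ (-1 : ℤ)) v)) = tp u v := by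
      rw [hR2']
      congr 1 <;> simp [zpow_neg_one]
    rw [← h1, cancel]
  have hRz : ∀ (n : ℤ) (u v : H), (R ^ (2 * n)) (tp u v) = tp ((T ^ n) u) ((T ^ n) v) := by
    intro n
    induction n using Int.induction_on with
    | zero => intro u v; simp
    | succ n ih =>
        intro u v
        have h2 : (2 : ℤ) * (n + 1) = 2 + 2 * n := by ring
        rw [h2, zpow_add, LinearIsometryEquiv.coe_mul, Function.comp_apply, ih, hR2']
        congr 1 <;> rw [show ((n : ℤ) + 1) = 1 + n by ring, zpow_add, zpow_one,
          LinearIsometryEquiv.coe_mul, Function.comp_apply]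
    | pred n ih =>
        intro u v
        have h2 : (2 : ℤ) * (-(n : ℤ) - 1) = -2 + 2 * (-(n : ℤ)) := by ring
        rw [h2, zpow_add, LinearIsometryEquiv.coe_mul, Function.comp_apply, ih, hR2neg]
        congr 1 <;> rw [show (-(n : ℤ) - 1) = -1 + -(n : ℤ) by ring, zpow_add,
          LinearIsometryEquiv.coe_mul, Function.comp_apply]
    -- composition helpers
  have hTcomp : ∀ (p q : ℤ) (x : H), (T ^ p) ((T ^ q) x) = (T ^ (p + q)) x := by
    intro p q x
    rw [zpow_add, LinearIsometryEquiv.coe_mul, Function.comp_apply]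
  have hTnat : ∀ (d : ℕ) (x : H), (T ^ d) x = (T ^ (d : ℤ)) x := by
    intro d x; rw [zpow_natCast]
  -- weak convergence on elementary tensors
  have hWel : ∀ u v u' v' : H,
      Tendsto (fun i => (inner ℂ (tp ((T ^ k i) u) ((T ^ k i) v)) (tp u' v') : ℂ)) atTop
        (nhds (inner ℂ (tp ((a : ℂ) • u + c • T u) ((a : ℂ) • v + c • T v)) (tp u' v'))) := by
    intro u v u' v'
    simp only [htp_inner]
    exact (hweak u u').mul (hweak v v')
  -- weak convergence against elements of the span
  have hWspan : ∀ u v : H, ∀ z ∈ Submodule.span ℂ (Set.range fun p : H × H => tp p.1 p.2),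
      Tendsto (fun i => (inner ℂ
        (tp ((T ^ k i) u) ((T ^ k i) v) - tp ((a : ℂ) • u + c • T u) ((a : ℂ) • v + c • T v))
        z : ℂ)) atTop (nhds 0) := by
    intro u v z hz
    induction hz using Submodule.span_induction with
    | mem z hz =>
        obtain ⟨⟨u', v'⟩, rfl⟩ := hz
        simp only [inner_sub_left]
        have hconst : Tendsto (fun _ : ℕ =>
            (inner ℂ (tp ((a : ℂ) • u + c • T u) ((a : ℂ) • v + c • T v)) (tp u' v') : ℂ))
            atTop (nhds (inner ℂ (tp ((a : ℂ) • u + c • T u) ((a : ℂ) • v + c • T v)) (tp u' v'))) :=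
          tendsto_const_nhds
        simpa only [sub_self] using (hWel u v u' v').sub hconst
    | zero => simp
    | add y z' _ _ ihy ihz =>
        simp only [inner_add_right]
        simpa only [add_zero] using ihy.add ihz
    | smul r z' _ ih =>
        simp only [inner_smul_right]
        simpa only [mul_zero] using ih.const_mul r
  -- weak convergence against arbitrary vectors
  have hW : ∀ u v : H, ∀ z : K,
      Tendsto (fun i => (inner ℂ (tp ((T ^ k i) u) ((T ^ k i) v)) z : ℂ)) atTop
        (nhds (inner ℂ (tp ((a : ℂ) • u + c • T u) ((a : ℂ) • v + c • T v)) z)) := by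
    intro u v z
    rw [← tendsto_sub_nhds_zero_iff]
    simp only [← inner_sub_left]
    set g : ℕ → K := fun i =>
      tp ((T ^ k i) u) ((T ^ k i) v) - tp ((a : ℂ) • u + c • T u) ((a : ℂ) • v + c • T v)
      with hg
    set C : ℝ := ‖u‖ * ‖v‖ + ‖(a : ℂ) • u + c • T u‖ * ‖(a : ℂ) • v + c • T v‖ with hC
    have hC0 : 0 ≤ C := by positivity
    have hbound : ∀ i, ‖g i‖ ≤ C := by
      intro i
      calc ‖g i‖ ≤ ‖tp ((T ^ k i) u) ((T ^ k i) v)‖ +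
            ‖tp ((a : ℂ) • u + c • T u) ((a : ℂ) • v + c • T v)‖ := norm_sub_le _ _
        _ = C := by rw [htp_norm, htp_norm, hC]; simp
    rw [NormedAddCommGroup.tendsto_nhds_zero]
    intro ε hε
    obtain ⟨z', hz'mem, hz'close⟩ :
        ∃ z' ∈ Submodule.span ℂ (Set.range fun p : H × H => tp p.1 p.2),
          dist z z' < ε / (2 * (C + 1)) := by
      have hcl := htp_dense z
      exact Metric.mem_closure_iff.mp hcl _ (by positivity)
    have h2 := hWspan u v z' hz'mem
    rw [NormedAddCommGroup.tendsto_nhds_zero] at h2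
    filter_upwards [h2 (ε / 2) (by positivity)] with i hi
    have hsplit : (inner ℂ (g i) z : ℂ) = inner ℂ (g i) z' + inner ℂ (g i) (z - z') := by
      rw [← inner_add_right]
      congr 1
      abel
    rw [hsplit]
    calc ‖(inner ℂ (g i) z' : ℂ) + inner ℂ (g i) (z - z')‖
        ≤ ‖(inner ℂ (g i) z' : ℂ)‖ + ‖(inner ℂ (g i) (z - z') : ℂ)‖ := norm_add_le _ _
      _ ≤ ε / 2 + ‖g i‖ * ‖z - z'‖ := add_le_add (le_of_lt hi) (norm_inner_le_norm _ _)
      _ ≤ ε / 2 + C * (ε / (2 * (C + 1))) := by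
          gcongr
          · exact hbound i
          · rw [← dist_eq_norm]; exact le_of_lt hz'close
      _ < ε := by
          have heq : (C + 1) * (ε / (2 * (C + 1))) = ε / 2 := by
            field_simp
          have hlt : C * (ε / (2 * (C + 1))) < (C + 1) * (ε / (2 * (C + 1))) :=
            mul_lt_mul_of_pos_right (by linarith) (by positivity)
          linarith
  -- weak limits of sequences in M stay in M
  haveI : CompleteSpace M := (S.isClosed_topologicalClosure).completeSpace_coe
  have hWC : ∀ u v : H, (∀ i, tp ((T ^ k i) u) ((T ^ k i) v) ∈ M) →
      tp ((a : ℂ) • u + c • T u) ((a : ℂ) • v + c • T v) ∈ M := by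
    intro u v hmem
    rw [← Submodule.orthogonal_orthogonal M, Submodule.mem_orthogonal]
    intro w hw
    have h1 := hW u v w
    have h0 : ∀ i, (inner ℂ (tp ((T ^ k i) u) ((T ^ k i) v)) w : ℂ) = 0 := fun i =>
      Submodule.inner_right_of_mem_orthogonal (hmem i) hw
    simp only [h0] at h1
    have h2 : (0 : ℂ) = inner ℂ (tp ((a : ℂ) • u + c • T u) ((a : ℂ) • v + c • T v)) w :=
      tendsto_nhds_unique tendsto_const_nhds h1
    rw [← inner_conj_symm, ← h2, map_zero]
  have hSM : S ≤ M := Submodule.le_topologicalClosure S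
  have hff : tp f f ∈ M := by
    apply hSM
    apply Submodule.subset_span
    exact ⟨0, by simp⟩
  have hca : c * (a : ℂ) ≠ 0 := by
    apply mul_ne_zero
    · rw [hc]
      exact_mod_cast Complex.ofReal_ne_zero.mpr (by linarith)
    · exact_mod_cast Complex.ofReal_ne_zero.mpr (by linarith)
  -- the main induction: tp (T^d f) f and tp (T^d f) (T f) are in M for all d : ℕ
  have hC : ∀ d : ℕ, tp ((T ^ d) f) f ∈ M ∧ tp ((T ^ d) f) (T f) ∈ M := by
    intro d
    induction d with
    | zero =>
        refine ⟨by simpa using hff, ?_⟩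
        have h1 := hMR 1 _ hff
        rw [zpow_one, hR] at h1
        simpa using h1
    | succ d ih =>
        have hTd : (T ^ (d + 1)) f = T ((T ^ d) f) := by
          rw [pow_succ']
          rfl
        -- tp (T^{d+1} f) (T f) ∈ M
        have hP11 : tp ((T ^ (d + 1)) f) (T f) ∈ M := by
          have h1 := hMR 2 _ ih.1
          rw [hR2'] at h1
          rw [hTd]
          exact h1
        refine ⟨?_, hP11⟩
        -- sequence members
        have hy : ∀ i, tp ((T ^ k i) ((T ^ d) f)) ((T ^ k i) f) ∈ M := by
          intro i
          have h1 := hMR (2 * (k i : ℤ)) _ ih.1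
          rw [hRz] at h1
          simpa [← hTnat] using h1
        have hL := hWC ((T ^ d) f) f hy
        -- expand the limit
        have hexp : tp ((a : ℂ) • ((T ^ d) f) + c • T ((T ^ d) f)) ((a : ℂ) • f + c • T f)
            = ((a : ℂ) * (a : ℂ)) • tp ((T ^ d) f) f
              + ((a : ℂ) * c) • tp ((T ^ d) f) (T f)
              + (c * (a : ℂ)) • tp ((T ^ (d + 1)) f) f
              + (c * c) • tp ((T ^ (d + 1)) f) (T f) := by
          rw [hTd]
          simp only [map_add, map_smul, LinearMap.add_apply, LinearMap.smul_apply, smul_add,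
            smul_smul]
          module
        rw [hexp] at hL
        have hsmul : (c * (a : ℂ)) • tp ((T ^ (d + 1)) f) f ∈ M := by
          have h1 : (c * (a : ℂ)) • tp ((T ^ (d + 1)) f) f
              = (((a : ℂ) * (a : ℂ)) • tp ((T ^ d) f) f
                + ((a : ℂ) * c) • tp ((T ^ d) f) (T f)
                + (c * (a : ℂ)) • tp ((T ^ (d + 1)) f) f
                + (c * c) • tp ((T ^ (d + 1)) f) (T f))
                - ((a : ℂ) * (a : ℂ)) • tp ((T ^ d) f) f
                - ((a : ℂ) * c) • tp ((T ^ d) f) (T f)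
                - (c * c) • tp ((T ^ (d + 1)) f) (T f) := by abel
          rw [h1]
          exact Submodule.sub_mem M (Submodule.sub_mem M (Submodule.sub_mem M hL
            (Submodule.smul_mem M _ ih.1)) (Submodule.smul_mem M _ ih.2))
            (Submodule.smul_mem M _ hP11)
        have := Submodule.smul_mem M (c * (a : ℂ))⁻¹ hsmul
        rwa [smul_smul, inv_mul_cancel₀ hca, one_smul] at this
  -- all elementary tensors of orbit vectors are in M
  have hall : ∀ m n : ℤ, tp ((T ^ m) f) ((T ^ n) f) ∈ M := by
    intro m n
    rcases le_or_gt n m with h | h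
    · set d : ℕ := (m - n).toNat with hd
      have hdz : (d : ℤ) = m - n := Int.toNat_of_nonneg (by omega)
      have h1 := hMR (2 * n) _ (hC d).1
      rw [hRz] at h1
      have he1 : (T ^ (n : ℤ)) ((T ^ d) f) = (T ^ m) f := by
        rw [hTnat, hTcomp, show n + (d : ℤ) = m by omega]
      rwa [he1] at h1
    · set d : ℕ := (n - m - 1).toNat with hd
      have hdz : (d : ℤ) = n - m - 1 := Int.toNat_of_nonneg (by omega)
      have h0 : tp f (T ((T ^ d) f)) ∈ M := by
        have h1 := hMR 1 _ (hC d).1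
        rwa [zpow_one, hR] at h1
      have h1 := hMR (2 * m) _ h0
      rw [hRz] at h1
      have he2 : (T ^ (m : ℤ)) (T ((T ^ d) f)) = (T ^ n) f := by
        have hT1 : T ((T ^ d) f) = (T ^ (1 : ℤ)) ((T ^ (d : ℤ)) f) := by
          rw [zpow_one, hTnat]
        rw [hT1, hTcomp, hTcomp, show m + 1 + (d : ℤ) = n by omega]
      rwa [he2] at h1
  -- all elementary tensors are in M
  have hel : ∀ u v : H, tp u v ∈ M := by
    set N : Submodule ℂ H := Submodule.span ℂ (Set.range fun n : ℤ => (T ^ n) f) with hN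
    have hNN : ∀ u ∈ N, ∀ v ∈ N, tp u v ∈ M := by
      intro u hu
      induction hu using Submodule.span_induction with
      | mem u hu =>
          obtain ⟨m, rfl⟩ := hu
          intro v hv
          induction hv using Submodule.span_induction with
          | mem v hv => obtain ⟨n, rfl⟩ := hv; exact hall m n
          | zero => simp only [map_zero]; exact Submodule.zero_mem M
          | add y z _ _ ihy ihz => rw [map_add]; exact Submodule.add_mem M ihy ihz
          | smul r y _ ihy => rw [map_smul]; exact Submodule.smul_mem M r ihy
      | zero =>
          intro v hv
          simp only [map_zero, LinearMap.zero_apply]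
          exact Submodule.zero_mem M
      | add y z _ _ ihy ihz =>
          intro v hv
          rw [map_add, LinearMap.add_apply]
          exact Submodule.add_mem M (ihy v hv) (ihz v hv)
      | smul r y _ ihy =>
          intro v hv
          rw [map_smul, LinearMap.smul_apply]
          exact Submodule.smul_mem M r (ihy v hv)
    have hcont : Continuous (fun p : H × H => tp p.1 p.2) := by
      have hb : ∀ x y : H, ‖tp x y‖ ≤ 1 * ‖x‖ * ‖y‖ := by
        intro x y; rw [htp_norm, one_mul]
      exact (LinearMap.mkContinuous₂ tp 1 hb).continuous₂
    have hclosed : IsClosed ((fun p : H × H => tp p.1 p.2) ⁻¹' (M : Set K)) :=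
      (S.isClosed_topologicalClosure).preimage hcont
    have hsub : ((N : Set H) ×ˢ (N : Set H)) ⊆ (fun p : H × H => tp p.1 p.2) ⁻¹' (M : Set K) :=
      fun p hp => hNN _ hp.1 _ hp.2
    have hdense : Dense ((N : Set H) ×ˢ (N : Set H)) := hcyc.prod hcyc
    intro u v
    have h1 : closure ((N : Set H) ×ˢ (N : Set H)) ⊆
        (fun p : H × H => tp p.1 p.2) ⁻¹' (M : Set K) := closure_minimal hsub hclosed
    have h2 : ((u, v) : H × H) ∈ closure ((N : Set H) ×ˢ (N : Set H)) := by
      rw [hdense.closure_eq]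
      exact Set.mem_univ _
    exact h1 h2
  -- conclude
  rw [Submodule.dense_iff_topologicalClosure_eq_top]
  rw [eq_top_iff]
  have hle : Submodule.span ℂ (Set.range fun p : H × H => tp p.1 p.2) ≤ M := by
    rw [Submodule.span_le]
    rintro x ⟨p, rfl⟩
    exact hel p.1 p.2
  have h2 : (Submodule.span ℂ (Set.range fun p : H × H => tp p.1 p.2)).topologicalClosure
      ≤ M.topologicalClosure := Submodule.topologicalClosure_mono hle
  rw [Submodule.dense_iff_topologicalClosure_eq_top] at htp_dense
  rw [htp_dense] at h2
  have h3 : M.topologicalClosure = M := by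
    apply le_antisymm
    · intro x hx
      exact (S.isClosed_topologicalClosure).closure_subset_iff.mpr (fun y hy => hy) hx
    · exact Submodule.le_topologicalClosure M
  rw [h3] at h2
  exact h2
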